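/- For n ≥ b > k ≥ 1, any family of T functions from [n] to [b] such that every k-element subset of [n] admits an injective member must satisfy T ≥ C(n,k) / (C(b,k)·(n/b)^k) = (b^k/b^{\underline{k}})·(n^{\underline{k}}/n^k). -/

import Mathlib

open Finset


/-- Bernoulli-type inequality: for `X > 0`, `X + y ≥ 0`,
`X^(k-1) * (X + k*y) ≤ (X+y)^k` when `k ≥ 1`. -/
lemma bern_key (k : ℕ) (hk : 1 ≤ k) (X y : ℝ) (hX0 : 0 ≤ X) (hXy : 0 ≤ X + y) :
    X ^ (k - 1) * (X + k * y) ≤ (X + y) ^ k := by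
  rcases hX0.eq_or_lt with hX | hX
  · subst hX
    obtain ⟨k, rfl⟩ : ∃ k', k = k' + 1 := ⟨k - 1, by omega⟩
    have hy : 0 ≤ y := by linarith
    cases k with
    | zero => simp
    | succ k =>
      simp only [zero_add]
      rw [zero_pow (by omega), zero_mul]
      positivity
  have hx2 : (-2 : ℝ) ≤ y / X := by
    have : (-1 : ℝ) ≤ y / X := by
      rw [le_div_iff₀ hX]
      linarith
    linarith
  have h := one_add_mul_le_pow hx2 k
  have h1x : (1 : ℝ) + y / X = (X + y) / X := by field_simp
  have h2 : (1 + (k : ℝ) * (y / X)) * X ^ k ≤ ((X + y) / X) ^ k * X ^ k := by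
    rw [h1x] at h
    exact mul_le_mul_of_nonneg_right h (by positivity)
  have hXk : X ^ k = X * X ^ (k - 1) := by
    rw [← pow_succ']
    congr 1
    omega
  calc X ^ (k - 1) * (X + k * y)
      = (1 + (k : ℝ) * (y / X)) * X ^ k := by
        rw [hXk]; field_simp
    _ ≤ ((X + y) / X) ^ k * X ^ k := h2
    _ = (X + y) ^ k := by
        rw [div_pow, div_mul_eq_mul_div, mul_div_assoc, div_self (by positivity), mul_one]

lemma esymm_bound {ι : Type*} [DecidableEq ι] (s : Finset ι) (x : ι → ℝ)
    (hx : ∀ i ∈ s, 0 ≤ x i) : ∀ k : ℕ,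
    (∑ A ∈ s.powersetCard k, ∏ i ∈ A, x i) * (s.card : ℝ) ^ k
      ≤ (s.card.choose k : ℝ) * (∑ i ∈ s, x i) ^ k := by
  induction s using Finset.cons_induction with
  | empty =>
    intro k
    cases k with
    | zero => simp
    | succ k => simp
  | cons i s' his ih =>
    intro k
    have hxi : 0 ≤ x i := hx i (mem_cons_self i s')
    have hx' : ∀ j ∈ s', 0 ≤ x j := fun j hj => hx j (mem_cons_of_mem hj)
    have ih := ih hx'
    rcases Nat.eq_zero_or_pos k with rfl | hk
    · simp
    obtain ⟨k, rfl⟩ : ∃ k', k = k' + 1 := ⟨k - 1, by omega⟩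
    have hS : 0 ≤ ∑ j ∈ s', x j := Finset.sum_nonneg hx'
    -- decomposition of the symmetric sum
    have hdecomp : ∑ A ∈ (cons i s' his).powersetCard (k+1), ∏ j ∈ A, x j
        = (∑ A ∈ s'.powersetCard (k+1), ∏ j ∈ A, x j)
          + x i * ∑ A ∈ s'.powersetCard k, ∏ j ∈ A, x j := by
      rw [cons_eq_insert, powersetCard_succ_insert his]
      rw [sum_union]
      · congr 1
        rw [sum_image, mul_sum]
        · refine sum_congr rfl fun A hA => ?_
          have hiA : i ∉ A := fun hiA =>
            his ((mem_powersetCard.1 hA).1 hiA)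
          rw [prod_insert hiA]
        · intro A hA B hB hAB
          have hiA : i ∉ A := fun h => his ((mem_powersetCard.1 hA).1 h)
          have hiB : i ∉ B := fun h => his ((mem_powersetCard.1 hB).1 h)
          have := congrArg (Finset.erase · i) hAB
          simpa [Finset.erase_insert hiA, Finset.erase_insert hiB] using this
      · rw [Finset.disjoint_left]
        intro A hA hA'
        have hiA : i ∉ A := fun h => his ((mem_powersetCard.1 hA).1 h)
        obtain ⟨B, hB, rfl⟩ := Finset.mem_image.1 hA'
        exact hiA (mem_insert_self i B)
    rw [hdecomp, card_cons, sum_cons]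
    set m := s'.card with hm
    set S := ∑ j ∈ s', x j with hSdef
    set a := x i
    set E1 := ∑ A ∈ s'.powersetCard (k+1), ∏ j ∈ A, x j with hE1
    set E0 := ∑ A ∈ s'.powersetCard k, ∏ j ∈ A, x j with hE0
    rcases lt_or_ge m k with hkm | hkm
    · -- k > m : everything vanishes
      have h1 : E1 = 0 := by
        rw [hE1, Finset.powersetCard_eq_empty.2 (by rw [← hm]; omega), sum_empty]
      have h0 : E0 = 0 := by
        rw [hE0, Finset.powersetCard_eq_empty.2 (by rw [← hm]; omega), sum_empty]
      have hc : (m+1).choose (k+1) = 0 := Nat.choose_eq_zero_of_lt (by omega)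
      rw [h1, h0, hc]
      norm_num
    -- remaining degenerate case m = 0 (then k = 0)
    rcases Nat.eq_zero_or_pos m with hm0 | hmpos
    · have hk0 : k = 0 := by omega
      subst hk0
      have hs' : s' = ∅ := Finset.card_eq_zero.1 (by rw [← hm]; exact hm0)
      have e1 : E1 = 0 := by
        rw [hE1, Finset.powersetCard_eq_empty.2 (by rw [← hm]; omega), sum_empty]
      have e0 : E0 = 1 := by rw [hE0]; simp [hs']
      have eS : S = 0 := by rw [hSdef, hs']; simp
      rw [e1, e0, eS, hm0]
      norm_num
    have IH1 : E1 * (m:ℝ)^(k+1) ≤ (m.choose (k+1) : ℝ) * S^(k+1) := ih (k+1)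
    have IH2 : E0 * (m:ℝ)^k ≤ (m.choose k : ℝ) * S^k := ih k
    have hmR : (0:ℝ) < (m:ℝ)^(k+1) := by positivity
    rw [← mul_le_mul_iff_of_pos_right hmR]
    have h1 : ((m+1).choose (k+1) : ℝ) * ((m:ℝ) - (k:ℝ)) = ((m:ℝ)+1) * (m.choose (k+1)) := by
      have h := Nat.choose_mul_succ_eq m (k+1)
      have h' := congrArg (Nat.cast (R := ℝ)) h
      push_cast [Nat.cast_sub (show k ≤ m from hkm)] at h'
      linarith
    have h2 : ((m+1).choose (k+1) : ℝ) * ((k:ℝ)+1) = ((m:ℝ)+1) * (m.choose k) := by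
      have h := (Nat.add_one_mul_choose_eq m k).symm
      exact_mod_cast congrArg (Nat.cast (R := ℝ)) h
    have hmS : (0:ℝ) ≤ (m:ℝ) * S := by positivity
    have hma : (0:ℝ) ≤ (m:ℝ) * a := by positivity
    have key := bern_key (k+1) (by omega) (((m:ℝ)+1) * S) ((m:ℝ) * a - S)
      (by positivity) (by nlinarith)
    simp only [Nat.add_sub_cancel] at key
    push_cast at key ⊢
    calc (E1 + a * E0) * ((m:ℝ)+1)^(k+1) * (m:ℝ)^(k+1)
        = E1 * (m:ℝ)^(k+1) * ((m:ℝ)+1)^(k+1)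
          + (E0 * (m:ℝ)^k) * (a * m * ((m:ℝ)+1)^(k+1)) := by ring
      _ ≤ (m.choose (k+1) : ℝ) * S^(k+1) * ((m:ℝ)+1)^(k+1)
          + ((m.choose k : ℝ) * S^k) * (a * m * ((m:ℝ)+1)^(k+1)) := by
          gcongr <;> positivity
      _ = ((m+1).choose (k+1) : ℝ) *
            (((m:ℝ)+1) ^ k * S ^ k * ((((m:ℝ)+1) * S) + ((k:ℝ)+1) * ((m:ℝ) * a - S))) := by
          linear_combination (-(S^(k+1) * ((m:ℝ)+1)^k)) * h1
            - (S^k * (m:ℝ) * a * ((m:ℝ)+1)^k) * h2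
      _ ≤ ((m+1).choose (k+1) : ℝ) * ((((m:ℝ)+1) * S) + ((m:ℝ) * a - S))^(k+1) := by
          rw [mul_pow] at key
          exact mul_le_mul_of_nonneg_left key (by positivity)
      _ = ((m+1).choose (k+1) : ℝ) * (a + S)^(k+1) * (m:ℝ)^(k+1) := by
          have hmm : (((m:ℝ)+1) * S) + ((m:ℝ) * a - S) = (m:ℝ) * (a + S) := by ring
          rw [hmm, mul_pow]
          ring

open scoped Classical in
lemma count_injOn_le (n b k : ℕ) (g : Fin n → Fin b) :
    (((univ : Finset (Fin n)).powersetCard k).filter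
        (fun A : Finset (Fin n) => Set.InjOn g (A : Set (Fin n)))).card
      ≤ ∑ S ∈ (univ : Finset (Fin b)).powersetCard k,
          ∏ j ∈ S, ((univ : Finset (Fin n)).filter (fun i => g i = j)).card := by
  classical
  set D := ((univ : Finset (Fin n)).powersetCard k).filter
      (fun A : Finset (Fin n) => Set.InjOn g (A : Set (Fin n))) with hD
  have hex : ∀ A ∈ D, ∀ j ∈ A.image g, ∃! i, i ∈ A ∧ g i = j := by
    intro A hA j hj
    obtain ⟨i, hi, rfl⟩ := Finset.mem_image.1 hj
    have hinj : Set.InjOn g (A : Set (Fin n)) := (Finset.mem_filter.1 hA).2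
    exact ⟨i, ⟨hi, rfl⟩, fun i' hi' =>
      hinj (Finset.mem_coe.2 hi'.1) (Finset.mem_coe.2 hi) hi'.2⟩
  set T := ((univ : Finset (Fin b)).powersetCard k).sigma
      (fun S => S.pi (fun j => (univ : Finset (Fin n)).filter (fun i => g i = j))) with hT
  have hcardT : T.card = ∑ S ∈ (univ : Finset (Fin b)).powersetCard k,
      ∏ j ∈ S, ((univ : Finset (Fin n)).filter (fun i => g i = j)).card := by
    rw [hT, Finset.card_sigma]
    exact Finset.sum_congr rfl fun S _ => Finset.card_pi S _
  rw [← hcardT]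
  set f : Finset (Fin n) → (S : Finset (Fin b)) × (∀ j ∈ S, Fin n) :=
    fun A => if hA : A ∈ D then
        ⟨A.image g, fun j hj => Finset.choose (fun i => g i = j) A (hex A hA j hj)⟩
      else ⟨∅, fun j hj => absurd hj (Finset.notMem_empty j)⟩ with hf
  apply Finset.card_le_card_of_injOn f
  · intro A hA
    rw [hf]
    simp only [dif_pos (Finset.mem_coe.1 hA)]
    rw [Finset.mem_coe, Finset.mem_sigma]
    constructor
    · rw [Finset.mem_powersetCard]
      refine ⟨Finset.subset_univ _, ?_⟩
      have hinj : Set.InjOn g (A : Set (Fin n)) := (Finset.mem_filter.1 hA).2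
      rw [Finset.card_image_of_injOn hinj]
      exact (Finset.mem_powersetCard.1 (Finset.mem_filter.1 hA).1).2
    · rw [Finset.mem_pi]
      intro j hj
      rw [Finset.mem_filter]
      exact ⟨Finset.mem_univ _, Finset.choose_property (fun i => g i = j) A (hex A hA j hj)⟩
  · have hsub : ∀ A ∈ D, ∀ A' ∈ D, f A = f A' → A ⊆ A' := by
      intro A hA A' hA' hff i hi
      rw [hf] at hff
      simp only [dif_pos hA, dif_pos hA'] at hff
      have h1 : A.image g = A'.image g := congrArg Sigma.fst hff
      have hj : g i ∈ A.image g := Finset.mem_image_of_mem g hi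
      have hj' : g i ∈ A'.image g := h1 ▸ hj
      have hval := congrArg
        (fun z : (S : Finset (Fin b)) × (∀ j ∈ S, Fin n) =>
          if h : g i ∈ z.1 then z.2 (g i) h else i) hff
      dsimp only at hval
      rw [dif_pos hj, dif_pos hj'] at hval
      have hAi : Finset.choose (fun i' => g i' = g i) A (hex A hA (g i) hj) = i :=
        (hex A hA (g i) hj).unique
          ⟨Finset.choose_mem (fun i' => g i' = g i) A (hex A hA (g i) hj), Finset.choose_property (fun i' => g i' = g i) A (hex A hA (g i) hj)⟩ ⟨hi, rfl⟩
      rw [hAi] at hval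
      rw [hval]
      exact Finset.choose_mem _ _ _
    intro A hA A' hA' hff
    exact Finset.Subset.antisymm (hsub A hA A' hA' hff) (hsub A' hA' A hA hff.symm)


/-- For n ≥ b > k ≥ 1, any family of T functions [n] → [b] such that every
k-element subset admits an injective member satisfies
T ≥ C(n,k)/(C(b,k)·(n/b)^k) = (b^k/b^{\underline k})·(n^{\underline k}/n^k). -/
theorem stmt14 (n b k T : ℕ) (hk : 1 ≤ k) (hbk : k < b) (hnb : b ≤ n)
    (F : Fin T → Fin n → Fin b)
    (hF : ∀ A : Finset (Fin n), A.card = k → ∃ t : Fin T,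
      Set.InjOn (F t) (A : Set (Fin n))) :
    (T : ℝ) ≥ (Nat.choose n k : ℝ) /
        ((Nat.choose b k : ℝ) * ((n : ℝ) / (b : ℝ)) ^ k) ∧
    (Nat.choose n k : ℝ) / ((Nat.choose b k : ℝ) * ((n : ℝ) / (b : ℝ)) ^ k)
      = ((b : ℝ) ^ k / (Nat.descFactorial b k : ℝ)) *
        ((Nat.descFactorial n k : ℝ) / (n : ℝ) ^ k) := by

  classical
  have hb0 : 0 < b := by omega
  have hn0 : 0 < n := by omega
  have hchoosebk : 0 < Nat.choose b k := Nat.choose_pos hbk.le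
  have hbR : (0:ℝ) < (b:ℝ) := by exact_mod_cast hb0
  have hnR : (0:ℝ) < (n:ℝ) := by exact_mod_cast hn0
  have hden : (0:ℝ) < (Nat.choose b k : ℝ) * ((n:ℝ)/(b:ℝ))^k := by
    have : (0:ℝ) < (Nat.choose b k : ℝ) := by exact_mod_cast hchoosebk
    positivity
  constructor
  · -- main counting bound
    have hcount : ∀ g : Fin n → Fin b,
        ((((univ : Finset (Fin n)).powersetCard k).filter
          (fun A : Finset (Fin n) => Set.InjOn g (A : Set (Fin n)))).card : ℝ)
          ≤ (Nat.choose b k : ℝ) * ((n:ℝ)/(b:ℝ))^k := by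
      intro g
      have h1 := count_injOn_le n b k g
      have h1R : ((((univ : Finset (Fin n)).powersetCard k).filter
          (fun A : Finset (Fin n) => Set.InjOn g (A : Set (Fin n)))).card : ℝ)
          ≤ ∑ S ∈ (univ : Finset (Fin b)).powersetCard k,
              ∏ j ∈ S, (((univ : Finset (Fin n)).filter (fun i => g i = j)).card : ℝ) := by
        calc ((((univ : Finset (Fin n)).powersetCard k).filter
            (fun A : Finset (Fin n) => Set.InjOn g (A : Set (Fin n)))).card : ℝ)
            ≤ ((∑ S ∈ (univ : Finset (Fin b)).powersetCard k,
              ∏ j ∈ S, ((univ : Finset (Fin n)).filter (fun i => g i = j)).card : ℕ) : ℝ) := by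
              exact_mod_cast h1
          _ = ∑ S ∈ (univ : Finset (Fin b)).powersetCard k,
              ∏ j ∈ S, (((univ : Finset (Fin n)).filter (fun i => g i = j)).card : ℝ) := by
              push_cast; rfl
      have hfib : ∑ j ∈ (univ : Finset (Fin b)),
          (((univ : Finset (Fin n)).filter (fun i => g i = j)).card : ℝ) = (n:ℝ) := by
        have := Finset.card_eq_sum_card_fiberwise
          (f := g) (s := (univ : Finset (Fin n))) (t := (univ : Finset (Fin b)))
          (fun i _ => mem_univ _)
        rw [Finset.card_univ, Fintype.card_fin] at this
        exact_mod_cast this.symm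
      have h2 := esymm_bound (univ : Finset (Fin b))
        (fun j => (((univ : Finset (Fin n)).filter (fun i => g i = j)).card : ℝ))
        (fun j _ => by positivity) k
      rw [Finset.card_univ, Fintype.card_fin, hfib] at h2
      have hbk' : (0:ℝ) < (b:ℝ)^k := by positivity
      rw [div_pow, ← mul_div_assoc, le_div_iff₀ hbk']
      exact le_trans (mul_le_mul_of_nonneg_right h1R (le_of_lt hbk')) h2
    -- union bound
    have hsubset : (univ : Finset (Fin n)).powersetCard k ⊆
        (univ : Finset (Fin T)).biUnion (fun t =>
          ((univ : Finset (Fin n)).powersetCard k).filter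
            (fun A : Finset (Fin n) => Set.InjOn (F t) (A : Set (Fin n)))) := by
      intro A hA
      obtain ⟨t, ht⟩ := hF A (Finset.mem_powersetCard.1 hA).2
      exact Finset.mem_biUnion.2 ⟨t, mem_univ _, Finset.mem_filter.2 ⟨hA, ht⟩⟩
    have hchoose : Nat.choose n k ≤ ∑ t ∈ (univ : Finset (Fin T)),
        (((univ : Finset (Fin n)).powersetCard k).filter
          (fun A : Finset (Fin n) => Set.InjOn (F t) (A : Set (Fin n)))).card := by
      calc Nat.choose n k = ((univ : Finset (Fin n)).powersetCard k).card := by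
            rw [Finset.card_powersetCard, Finset.card_univ, Fintype.card_fin]
        _ ≤ _ := le_trans (Finset.card_le_card hsubset) Finset.card_biUnion_le
    have hfinal : (Nat.choose n k : ℝ) ≤ (T:ℝ) * ((Nat.choose b k : ℝ) * ((n:ℝ)/(b:ℝ))^k) := by
      calc (Nat.choose n k : ℝ)
          ≤ ∑ t ∈ (univ : Finset (Fin T)),
            ((((univ : Finset (Fin n)).powersetCard k).filter
              (fun A : Finset (Fin n) => Set.InjOn (F t) (A : Set (Fin n)))).card : ℝ) := by
            exact_mod_cast hchoose
        _ ≤ ∑ t ∈ (univ : Finset (Fin T)),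
            ((Nat.choose b k : ℝ) * ((n:ℝ)/(b:ℝ))^k) :=
            Finset.sum_le_sum (fun t _ => hcount (F t))
        _ = (T:ℝ) * ((Nat.choose b k : ℝ) * ((n:ℝ)/(b:ℝ))^k) := by
            rw [Finset.sum_const, Finset.card_univ, Fintype.card_fin, nsmul_eq_mul]
    rw [ge_iff_le, div_le_iff₀ hden]
    linarith
  · -- algebraic identity
    have hd1 : (Nat.descFactorial b k : ℝ) = (Nat.factorial k : ℝ) * (Nat.choose b k : ℝ) := by
      exact_mod_cast congrArg (Nat.cast (R := ℝ)) (Nat.descFactorial_eq_factorial_mul_choose b k)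
    have hd2 : (Nat.descFactorial n k : ℝ) = (Nat.factorial k : ℝ) * (Nat.choose n k : ℝ) := by
      exact_mod_cast congrArg (Nat.cast (R := ℝ)) (Nat.descFactorial_eq_factorial_mul_choose n k)
    have hfac : (Nat.factorial k : ℝ) ≠ 0 := by
      exact_mod_cast Nat.factorial_ne_zero k
    have hcbk : (Nat.choose b k : ℝ) ≠ 0 := by
      have : (0:ℝ) < (Nat.choose b k : ℝ) := by exact_mod_cast hchoosebk
      exact this.ne'
    rw [hd1, hd2]
    have hbne : (b:ℝ) ≠ 0 := hbR.ne'
    field_simp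
    ring_nf
    rw [mul_assoc _ ((b:ℝ)^k), ← mul_pow, mul_inv_cancel₀ hbne, one_pow, mul_one]
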